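/- Interpolation estimates for the decay norm: for every s ≥ s₀ > (d+1)/2 there exist constants C(s) ≥ C(s₀) ≥ 1, depending only on s, s₀ and d, such that for all matrices A, B indexed by I with finite decay norms, and all vectors v indexed by I: (i) |AB|_s ≤ C(s)|A|_{s₀}|B|_s + C(s₀)|A|_s|B|_{s₀}; (ii) |AB|_s ≤ C(s)|A|_s|B|_s; (iii) ‖Av‖_s ≤ C(s)(|A|_{s₀}‖v‖_s + |A|_s‖v‖_{s₀}). -/

import Mathlib

open scoped ENNReal NNReal

/-- Column index `k = (j,ℓ) ∈ ℤ_{≥0} × ℤᵈ`. -/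
abbrev KI (d : ℕ) := ℕ × (Fin d → ℤ)

/-- Full index `i = (σ,k) ∈ {−1,+1} × ℤ_{≥0} × ℤᵈ` (`Bool` encodes `{−1,+1}`). -/
abbrev II (d : ℕ) := Bool × KI d

/-- Difference of two indices, in `ℤ × ℤᵈ`. -/
def ksub {d : ℕ} (k k' : KI d) : ℤ × (Fin d → ℤ) := ((k.1 : ℤ) - (k'.1 : ℤ), k.2 - k'.2)

/-- The weight `⟨h⟩ = max(1,|h|)` (`|·|` the sup norm) of `h ∈ ℤ × ℤᵈ`. -/
noncomputable def hwt {d : ℕ} (h : ℤ × (Fin d → ℤ)) : ℝ≥0∞ :=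
  ((max 1 (max h.1.natAbs (Finset.univ.sup fun i => (h.2 i).natAbs)) : ℕ) : ℝ≥0∞)

/-- The weight `⟨k⟩ = max(1,|k|)` of `k ∈ ℤ_{≥0} × ℤᵈ`. -/
noncomputable def kwt {d : ℕ} (k : KI d) : ℝ≥0∞ :=
  ((max 1 (max k.1 (Finset.univ.sup fun i => (k.2 i).natAbs)) : ℕ) : ℝ≥0∞)

/-- The `s`-decay norm of an infinite matrix indexed by `I`. -/
noncomputable def dnorm (d : ℕ) (s : ℝ) (A : II d → II d → ℂ) : ℝ≥0∞ :=
  (⨆ σ : Bool, ⨆ σ' : Bool,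
    ∑' h : ℤ × (Fin d → ℤ),
      hwt h ^ (2 * s) *
        (⨆ p : {q : KI d × KI d // ksub q.1 q.2 = h},
          (‖A (σ, (p : KI d × KI d).1) (σ', (p : KI d × KI d).2)‖₊ : ℝ≥0∞)) ^ (2 : ℕ)) ^
    (1 / 2 : ℝ)

/-- The weighted `ℓ²` norm of a vector indexed by `I`. -/
noncomputable def vnorm (d : ℕ) (s : ℝ) (v : II d → ℂ) : ℝ≥0∞ :=
  (⨆ σ : Bool, ∑' k : KI d, kwt k ^ (2 * s) * (‖v (σ, k)‖₊ : ℝ≥0∞) ^ (2 : ℕ)) ^ (1 / 2 : ℝ)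

/-- Matrix product `(AB)_i^{i''} = Σ_{i'} A_i^{i'} B_{i'}^{i''}`. -/
noncomputable def mprod {d : ℕ} (A B : II d → II d → ℂ) : II d → II d → ℂ :=
  fun i i'' => ∑' i' : II d, A i i' * B i' i''

/-- Matrix-vector product `(Av)_i = Σ_{i'} A_i^{i'} v_{i'}`. -/
noncomputable def mvec {d : ℕ} (A : II d → II d → ℂ) (v : II d → ℂ) : II d → ℂ :=
  fun i => ∑' i' : II d, A i i' * v i'

namespace DNI

open Function MeasureTheory

lemma tsum_cs {ι : Type*} (f g : ι → ℝ≥0∞) :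
    (∑' i, f i * g i) ≤ (∑' i, f i ^ (2:ℕ)) ^ (1/2:ℝ) * (∑' i, g i ^ (2:ℕ)) ^ (1/2:ℝ) := by
  letI : MeasurableSpace ι := ⊤
  haveI : MeasurableSingletonClass ι := ⟨fun _ => trivial⟩
  have h2 : Real.HolderConjugate 2 2 := by constructor <;> norm_num
  have := ENNReal.lintegral_mul_le_Lp_mul_Lq (Measure.count : Measure ι) h2
    (f := f) (g := g) measurable_from_top.aemeasurable measurable_from_top.aemeasurable
  simp only [lintegral_count] at this
  calc (∑' i, f i * g i) ≤ (∑' i, f i ^ (2:ℝ)) ^ (1/2:ℝ) * (∑' i, g i ^ (2:ℝ)) ^ (1/2:ℝ) := this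
  _ = _ := by
      norm_num [show ((2:ℝ)) = ((2:ℕ):ℝ) by norm_num, ENNReal.rpow_natCast]

lemma hsq (x : ℝ≥0∞) : (x ^ (1/2:ℝ)) ^ (2:ℕ) = x := by
  rw [← ENNReal.rpow_natCast, ← ENNReal.rpow_mul]; norm_num

lemma sqh (x : ℝ≥0∞) : (x ^ (2:ℕ)) ^ (1/2:ℝ) = x := by
  rw [← ENNReal.rpow_natCast, ← ENNReal.rpow_mul]; norm_num

lemma half_mul_half (x : ℝ≥0∞) : x ^ (1/2:ℝ) * x ^ (1/2:ℝ) = x := by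
  rw [← ENNReal.rpow_add_of_nonneg _ _ (by norm_num) (by norm_num)]; norm_num

/-- Cauchy-Schwarz, squared form. -/
lemma tsum_cs_sq {ι : Type*} (f g : ι → ℝ≥0∞) :
    (∑' i, f i * g i) ^ (2:ℕ) ≤ (∑' i, f i ^ (2:ℕ)) * (∑' i, g i ^ (2:ℕ)) := by
  calc (∑' i, f i * g i) ^ (2:ℕ)
      ≤ ((∑' i, f i ^ (2:ℕ)) ^ (1/2:ℝ) * (∑' i, g i ^ (2:ℕ)) ^ (1/2:ℝ)) ^ (2:ℕ) :=
        pow_le_pow_left' (tsum_cs f g) 2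
    _ = _ := by rw [mul_pow, hsq, hsq]

/-- CS in the form `(∑ F·G)² ≤ (∑ F²·G)·(∑ G)`. -/
lemma tsum_cs_sq' {ι : Type*} (F G : ι → ℝ≥0∞) :
    (∑' i, F i * G i) ^ (2:ℕ) ≤ (∑' i, F i ^ (2:ℕ) * G i) * (∑' i, G i) := by
  have h := tsum_cs_sq (fun i => F i * (G i) ^ (1/2:ℝ)) (fun i => (G i) ^ (1/2:ℝ))
  simp only [mul_pow, hsq, mul_assoc, half_mul_half] at h
  exact h

/-- Young-type inequality, `ℓ¹` on `F`. -/
lemma youngF {α β γ : Type*} (φ : α → β → γ)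
    (h1 : ∀ b, Injective (fun a => φ a b)) (h2 : ∀ a, Injective (φ a))
    (F : γ → ℝ≥0∞) (G : β → ℝ≥0∞) :
    ∑' a, (∑' b, F (φ a b) * G b) ^ (2:ℕ) ≤ (∑' c, F c) ^ (2:ℕ) * (∑' b, G b ^ (2:ℕ)) := by
  have step : ∀ a, (∑' b, F (φ a b) * G b) ^ (2:ℕ)
      ≤ (∑' c, F c) * (∑' b, F (φ a b) * G b ^ (2:ℕ)) := by
    intro a
    have cs := tsum_cs_sq' (fun b => G b) (fun b => F (φ a b))
    simp only [mul_comm (G _) (F _)] at cs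
    calc (∑' b, F (φ a b) * G b) ^ (2:ℕ)
        ≤ (∑' b, G b ^ (2:ℕ) * F (φ a b)) * (∑' b, F (φ a b)) := cs
      _ ≤ (∑' b, G b ^ (2:ℕ) * F (φ a b)) * (∑' c, F c) :=
          mul_le_mul_right (ENNReal.tsum_comp_le_tsum_of_injective (h2 a) F) _
      _ = (∑' c, F c) * (∑' b, F (φ a b) * G b ^ (2:ℕ)) := by
          rw [mul_comm]; congr 1; exact tsum_congr fun b => mul_comm _ _
  calc ∑' a, (∑' b, F (φ a b) * G b) ^ (2:ℕ)
      ≤ ∑' a, (∑' c, F c) * (∑' b, F (φ a b) * G b ^ (2:ℕ)) := ENNReal.tsum_le_tsum step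
    _ = (∑' c, F c) * ∑' a, ∑' b, F (φ a b) * G b ^ (2:ℕ) := ENNReal.tsum_mul_left
    _ = (∑' c, F c) * ∑' b, ∑' a, F (φ a b) * G b ^ (2:ℕ) := by rw [ENNReal.tsum_comm]
    _ ≤ (∑' c, F c) * ∑' b, (∑' c, F c) * G b ^ (2:ℕ) := by
        refine mul_le_mul_right (ENNReal.tsum_le_tsum fun b => ?_) _
        rw [ENNReal.tsum_mul_right]
        exact mul_le_mul_left (ENNReal.tsum_comp_le_tsum_of_injective (h1 b) F) _
    _ = (∑' c, F c) ^ (2:ℕ) * (∑' b, G b ^ (2:ℕ)) := by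
        rw [ENNReal.tsum_mul_left, pow_two, mul_assoc]

/-- Young-type inequality, `ℓ¹` on `G`. -/
lemma youngG {α β γ : Type*} (φ : α → β → γ)
    (h1 : ∀ b, Injective (fun a => φ a b))
    (F : γ → ℝ≥0∞) (G : β → ℝ≥0∞) :
    ∑' a, (∑' b, F (φ a b) * G b) ^ (2:ℕ) ≤ (∑' c, F c ^ (2:ℕ)) * (∑' b, G b) ^ (2:ℕ) := by
  have step : ∀ a, (∑' b, F (φ a b) * G b) ^ (2:ℕ)
      ≤ (∑' b, F (φ a b) ^ (2:ℕ) * G b) * (∑' b, G b) :=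
    fun a => tsum_cs_sq' (fun b => F (φ a b)) G
  calc ∑' a, (∑' b, F (φ a b) * G b) ^ (2:ℕ)
      ≤ ∑' a, (∑' b, F (φ a b) ^ (2:ℕ) * G b) * (∑' b, G b) := ENNReal.tsum_le_tsum step
    _ = (∑' a, ∑' b, F (φ a b) ^ (2:ℕ) * G b) * (∑' b, G b) := ENNReal.tsum_mul_right
    _ = (∑' b, ∑' a, F (φ a b) ^ (2:ℕ) * G b) * (∑' b, G b) := by rw [ENNReal.tsum_comm]
    _ ≤ (∑' b, (∑' c, F c ^ (2:ℕ)) * G b) * (∑' b, G b) := by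
        refine mul_le_mul_left (ENNReal.tsum_le_tsum fun b => ?_) _
        rw [ENNReal.tsum_mul_right]
        exact mul_le_mul_left (ENNReal.tsum_comp_le_tsum_of_injective (h1 b) (fun c => F c ^ (2:ℕ))) _
    _ = _ := by rw [ENNReal.tsum_mul_left, pow_two, mul_assoc]

/-- `ℓ¹`-norm bounded by weighted `ℓ²`-norm. -/
lemma l1sq {ι : Type*} (w u : ι → ℝ≥0∞) (hw : ∀ i, w i ≠ 0) (hw' : ∀ i, w i ≠ ⊤) (t : ℝ) :
    (∑' i, u i) ^ (2:ℕ) ≤ (∑' i, w i ^ (-(2*t))) * (∑' i, w i ^ (2*t) * u i ^ (2:ℕ)) := by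
  have key : ∀ i, u i = w i ^ (-t) * (w i ^ t * u i) := by
    intro i
    rw [← mul_assoc, ← ENNReal.rpow_add _ _ (hw i) (hw' i)]
    norm_num
  calc (∑' i, u i) ^ (2:ℕ) = (∑' i, w i ^ (-t) * (w i ^ t * u i)) ^ (2:ℕ) := by
        congr 1; exact tsum_congr key
    _ ≤ (∑' i, (w i ^ (-t)) ^ (2:ℕ)) * (∑' i, (w i ^ t * u i) ^ (2:ℕ)) := tsum_cs_sq _ _
    _ = _ := by
        congr 1
        · exact tsum_congr fun i => by
            rw [← ENNReal.rpow_natCast (w i ^ (-t)), ← ENNReal.rpow_mul]; norm_num; ring_nf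
        · exact tsum_congr fun i => by
            rw [mul_pow, ← ENNReal.rpow_natCast (w i ^ t), ← ENNReal.rpow_mul]
            norm_num [mul_comm]

/-- `(a+b)^s ≤ 2^s (a^s + b^s)`. -/
lemma wsplit {s : ℝ} (hs : 0 ≤ s) {a b c : ℝ≥0∞} (h : a ≤ b + c) :
    a ^ s ≤ (2:ℝ≥0∞) ^ s * (b ^ s + c ^ s) := by
  have h1 : a ≤ 2 * (b ⊔ c) := by
    refine h.trans ?_
    rw [two_mul]
    exact add_le_add le_sup_left le_sup_right
  calc a ^ s ≤ ((2:ℝ≥0∞) * (b ⊔ c)) ^ s := ENNReal.rpow_le_rpow h1 hs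
    _ = (2:ℝ≥0∞) ^ s * (b ⊔ c) ^ s := ENNReal.mul_rpow_of_nonneg _ _ hs
    _ ≤ (2:ℝ≥0∞) ^ s * (b ^ s + c ^ s) := by
        refine mul_le_mul_right ?_ _
        rcases le_total b c with hbc | hbc
        · rw [sup_eq_right.2 hbc]; exact le_add_self
        · rw [sup_eq_left.2 hbc]; exact le_add_right le_rfl

lemma sq_add_le (a b : ℝ≥0∞) : (a + b) ^ (2:ℕ) ≤ 4 * (a ^ (2:ℕ) + b ^ (2:ℕ)) := by
  have h1 : a + b ≤ 2 * (a ⊔ b) := by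
    rw [two_mul]; exact add_le_add le_sup_left le_sup_right
  calc (a + b) ^ (2:ℕ) ≤ (2 * (a ⊔ b)) ^ (2:ℕ) := pow_le_pow_left' h1 2
    _ = 4 * (a ⊔ b) ^ (2:ℕ) := by rw [mul_pow]; norm_num
    _ ≤ 4 * (a ^ (2:ℕ) + b ^ (2:ℕ)) := by
        refine mul_le_mul_right ?_ _
        rcases le_total a b with hab | hab
        · rw [sup_eq_right.2 hab]; exact le_add_self
        · rw [sup_eq_left.2 hab]; exact le_add_right le_rfl

lemma sq_add4_le (a b c d : ℝ≥0∞) : ((a + b) + (c + d)) ^ (2:ℕ) ≤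
    16 * (a ^ (2:ℕ) + b ^ (2:ℕ) + c ^ (2:ℕ) + d ^ (2:ℕ)) := by
  calc ((a + b) + (c + d)) ^ (2:ℕ) ≤ 4 * ((a+b)^(2:ℕ) + (c+d)^(2:ℕ)) := sq_add_le _ _
    _ ≤ 4 * ((4 * (a^(2:ℕ) + b^(2:ℕ))) + (4 * (c^(2:ℕ) + d^(2:ℕ)))) :=
        mul_le_mul_right (add_le_add (sq_add_le a b) (sq_add_le c d)) _
    _ = 16 * (a ^ (2:ℕ) + b ^ (2:ℕ) + c ^ (2:ℕ) + d ^ (2:ℕ)) := by ring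

/-- finiteness of `∑_{n∈ℕ} max(1,n)^{-q}` for `q>1`. -/
lemma sumN_lt_top {q : ℝ} (hq : 1 < q) :
    ∑' n : ℕ, ((max 1 n : ℕ) : ℝ≥0∞) ^ (-q) < ⊤ := by
  have hcoe : ∀ n : ℕ, ((max 1 n : ℕ) : ℝ≥0∞) ^ (-q)
      = (((max 1 n : ℕ) : ℝ≥0) ^ (-q) : ℝ≥0) := by
    intro n
    rw [ENNReal.coe_rpow_of_ne_zero (by positivity)]
    norm_cast
  simp only [hcoe]
  rw [lt_top_iff_ne_top, ENNReal.tsum_coe_ne_top_iff_summable]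
  rw [← NNReal.summable_coe]
  have heq : ∀ n : ℕ, (((((max 1 n : ℕ) : ℝ≥0) ^ (-q) : ℝ≥0)) : ℝ)
      = ((max 1 n : ℕ) : ℝ) ^ (-q) := by
    intro n; rw [NNReal.coe_rpow]; norm_num
  simp only [heq]
  have hsum : Summable (fun n : ℕ => (n : ℝ) ^ (-q)) :=
    Real.summable_nat_rpow.2 (by linarith)
  have hsum1 : Summable (fun n : ℕ => ((n + 1 : ℕ) : ℝ) ^ (-q)) := by
    exact_mod_cast (summable_nat_add_iff 1).2 hsum
  have : Summable (fun n : ℕ => ((max 1 (n + 1) : ℕ) : ℝ) ^ (-q)) := by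
    refine hsum1.congr fun n => ?_
    congr 2
  exact (summable_nat_add_iff 1).1 this

/-- finiteness of `∑_{z∈ℤ} max(1,|z|)^{-q}` for `q>1`. -/
lemma sumZ_lt_top {q : ℝ} (hq : 1 < q) :
    ∑' z : ℤ, ((max 1 z.natAbs : ℕ) : ℝ≥0∞) ^ (-q) < ⊤ := by
  have hsurj : Surjective (fun p : ℕ × Bool => (if p.2 then (p.1 : ℤ) else -(p.1 : ℤ))) := by
    intro z
    rcases le_or_gt 0 z with hz | hz
    · exact ⟨(z.natAbs, true), by simp [Int.natAbs_of_nonneg hz]⟩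
    · refine ⟨(z.natAbs, false), ?_⟩
      show (if False = true then ((z.natAbs : ℕ) : ℤ) else -((z.natAbs : ℕ) : ℤ)) = z
      rw [if_neg (by simp)]
      omega
  calc ∑' z : ℤ, ((max 1 z.natAbs : ℕ) : ℝ≥0∞) ^ (-q)
      ≤ ∑' p : ℕ × Bool, ((max 1 (if p.2 then (p.1 : ℤ) else -(p.1 : ℤ)).natAbs : ℕ) : ℝ≥0∞) ^ (-q) :=
        ENNReal.tsum_le_tsum_comp_of_surjective hsurj _
    _ = ∑' p : ℕ × Bool, ((max 1 p.1 : ℕ) : ℝ≥0∞) ^ (-q) := by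
        refine tsum_congr fun p => ?_
        rcases p with ⟨n, b⟩
        cases b <;> simp
    _ = ∑' n : ℕ, ∑' _ : Bool, ((max 1 n : ℕ) : ℝ≥0∞) ^ (-q) := ENNReal.tsum_prod'
    _ = 2 * ∑' n : ℕ, ((max 1 n : ℕ) : ℝ≥0∞) ^ (-q) := by
        rw [← ENNReal.tsum_mul_left]
        refine tsum_congr fun n => ?_
        rw [tsum_bool, two_mul]
    _ < ⊤ := ENNReal.mul_lt_top (by norm_num) (sumN_lt_top hq)

/-- Factorization of a sum of products over a pi type. -/
lemma tsum_pi_prod (m : ℕ) (g : ℤ → ℝ≥0∞) :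
    ∑' b : Fin m → ℤ, (∏ i, g (b i)) = (∑' z : ℤ, g z) ^ m := by
  induction m with
  | zero =>
      rw [tsum_eq_single (fun i => i.elim0)]
      · simp
      · intro b hb
        exact absurd (funext fun i => i.elim0) (Ne.symm hb)
  | succ m ih =>
      rw [← (Fin.consEquiv (fun _ : Fin (m+1) => ℤ)).tsum_eq]
      have hc : ∀ p : ℤ × (Fin m → ℤ),
          (∏ i, g (((Fin.consEquiv fun _ : Fin (m+1) => ℤ) p) i)) = g p.1 * ∏ i, g (p.2 i) := by
        intro p
        simp [Fin.consEquiv, Fin.prod_univ_succ]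
      rw [tsum_congr hc]
      calc ∑' p : ℤ × (Fin m → ℤ), g p.1 * ∏ i, g (p.2 i)
          = ∑' a : ℤ, ∑' b : Fin m → ℤ, g a * ∏ i, g (b i) := ENNReal.tsum_prod'
        _ = (∑' z : ℤ, g z) * ∑' b : Fin m → ℤ, ∏ i, g (b i) := by
            simp only [ENNReal.tsum_mul_left]
            rw [ENNReal.tsum_mul_right]
        _ = (∑' z : ℤ, g z) ^ (m + 1) := by rw [ih, pow_succ, mul_comm]

variable {d : ℕ}

lemma hwt_ne_zero (h : ℤ × (Fin d → ℤ)) : hwt h ≠ 0 := by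
  simp [hwt]
lemma hwt_ne_top (h : ℤ × (Fin d → ℤ)) : hwt h ≠ ⊤ := by
  simp [hwt]
lemma one_le_hwt (h : ℤ × (Fin d → ℤ)) : 1 ≤ hwt h := by
  rw [hwt]
  exact_mod_cast Nat.one_le_cast.2 (le_max_left _ _)
lemma kwt_ne_zero (k : KI d) : kwt k ≠ 0 := by simp [kwt]
lemma kwt_ne_top (k : KI d) : kwt k ≠ ⊤ := by simp [kwt]
lemma one_le_kwt (k : KI d) : 1 ≤ kwt k := by
  rw [kwt]
  exact_mod_cast Nat.one_le_cast.2 (le_max_left _ _)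

lemma hwt_add (x y : ℤ × (Fin d → ℤ)) : hwt (x + y) ≤ hwt x + hwt y := by
  rw [hwt, hwt, hwt, ← Nat.cast_add, Nat.cast_le]
  set Nx := max x.1.natAbs (Finset.univ.sup fun i => (x.2 i).natAbs) with hNx
  set Ny := max y.1.natAbs (Finset.univ.sup fun i => (y.2 i).natAbs) with hNy
  have h1 : ((x + y).1).natAbs ≤ Nx + Ny := by
    have := Int.natAbs_add_le x.1 y.1
    have h2 : x.1.natAbs ≤ Nx := le_max_left _ _
    have h3 : y.1.natAbs ≤ Ny := le_max_left _ _
    show (x.1 + y.1).natAbs ≤ Nx + Ny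
    omega
  have h2 : (Finset.univ.sup fun i => ((x + y).2 i).natAbs) ≤ Nx + Ny := by
    refine Finset.sup_le fun i _ => ?_
    have := Int.natAbs_add_le (x.2 i) (y.2 i)
    have h2 : (x.2 i).natAbs ≤ Nx :=
      le_trans (Finset.le_sup (f := fun i => (x.2 i).natAbs) (Finset.mem_univ i)) (le_max_right _ _)
    have h3 : (y.2 i).natAbs ≤ Ny :=
      le_trans (Finset.le_sup (f := fun i => (y.2 i).natAbs) (Finset.mem_univ i)) (le_max_right _ _)
    show ((x.2 i) + (y.2 i)).natAbs ≤ Nx + Ny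
    omega
  have : max (((x+y).1).natAbs) (Finset.univ.sup fun i => ((x + y).2 i).natAbs) ≤ Nx + Ny :=
    max_le h1 h2
  omega

lemma kwt_le (k k' : KI d) : kwt k ≤ hwt (ksub k k') + kwt k' := by
  rw [kwt, hwt, kwt, ← Nat.cast_add, Nat.cast_le]
  set Nx := max (ksub k k').1.natAbs (Finset.univ.sup fun i => ((ksub k k').2 i).natAbs) with hNx
  set Ny := max k'.1 (Finset.univ.sup fun i => (k'.2 i).natAbs) with hNy
  have h1 : k.1 ≤ Nx + Ny := by
    have h2 : ((k.1 : ℤ) - (k'.1 : ℤ)).natAbs ≤ Nx := le_max_left _ _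
    have h3 : k'.1 ≤ Ny := le_max_left _ _
    omega
  have h2 : (Finset.univ.sup fun i => (k.2 i).natAbs) ≤ Nx + Ny := by
    refine Finset.sup_le fun i _ => ?_
    have h2 : ((k.2 i) - (k'.2 i)).natAbs ≤ Nx := by
      refine le_trans ?_ (le_max_right _ _)
      exact Finset.le_sup (f := fun i => ((ksub k k').2 i).natAbs) (Finset.mem_univ i)
    have h3 : (k'.2 i).natAbs ≤ Ny :=
      le_trans (Finset.le_sup (f := fun i => (k'.2 i).natAbs) (Finset.mem_univ i)) (le_max_right _ _)
    omega
  omega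

lemma ksub_add (k k' k'' : KI d) : ksub k k' + ksub k' k'' = ksub k k'' := by
  simp only [ksub, Prod.mk_add_mk, Prod.mk.injEq]
  exact ⟨by ring, sub_add_sub_cancel _ _ _⟩

lemma ksub_inj_left (k' : KI d) : Injective (fun k : KI d => ksub k k') := by
  intro a b hab
  simp only [ksub, Prod.mk.injEq] at hab
  obtain ⟨h1, h2⟩ := hab
  have : a.1 = b.1 := by omega
  have h3 : a.2 = b.2 := by
    funext i
    have := congrFun h2 i
    simp at this
    linarith
  exact Prod.ext this h3

lemma ksub_inj_right (k : KI d) : Injective (fun k' : KI d => ksub k k') := by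
  intro a b hab
  simp only [ksub, Prod.mk.injEq] at hab
  obtain ⟨h1, h2⟩ := hab
  have : a.1 = b.1 := by omega
  have h3 : a.2 = b.2 := by
    funext i
    have := congrFun h2 i
    simp at this
    linarith
  exact Prod.ext this h3

lemma kwt_eq_hwt (k : KI d) : kwt k = hwt (((k.1 : ℤ), k.2)) := by
  simp [kwt, hwt]

/-- pointwise domination of `hwt^{-t}` by a product. -/
lemma hwt_rpow_le (t q : ℝ) (hq : 0 ≤ q) (hd : t = q * ((d : ℝ) + 1)) (h : ℤ × (Fin d → ℤ)) :
    hwt h ^ (-t) ≤ ((max 1 h.1.natAbs : ℕ) : ℝ≥0∞) ^ (-q) *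
      ∏ i, ((max 1 ((h.2 i)).natAbs : ℕ) : ℝ≥0∞) ^ (-q) := by
  set M : ℕ := max 1 (max h.1.natAbs (Finset.univ.sup fun i => (h.2 i).natAbs)) with hM
  have hnat : (max 1 h.1.natAbs) * ∏ i, (max 1 ((h.2 i)).natAbs) ≤ M ^ (d + 1) := by
    have h1 : max 1 h.1.natAbs ≤ M := by
      have : h.1.natAbs ≤ max h.1.natAbs (Finset.univ.sup fun i => (h.2 i).natAbs) :=
        le_max_left _ _
      omega
    have h2 : ∏ i, (max 1 ((h.2 i)).natAbs) ≤ M ^ d := by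
      have := Finset.prod_le_pow_card Finset.univ (fun i => max 1 ((h.2 i)).natAbs) M ?_
      · simpa using this
      · intro i _
        have hsup : (h.2 i).natAbs ≤ Finset.univ.sup fun i => (h.2 i).natAbs :=
          Finset.le_sup (f := fun i => (h.2 i).natAbs) (Finset.mem_univ i)
        have h5 : (Finset.univ.sup fun i => (h.2 i).natAbs) ≤ M :=
          le_trans (le_max_right h.1.natAbs _) (le_max_right 1 _)
        exact max_le (le_max_left 1 _) (hsup.trans h5)
    calc (max 1 h.1.natAbs) * ∏ i, (max 1 ((h.2 i)).natAbs) ≤ M * M ^ d :=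
          Nat.mul_le_mul h1 h2
      _ = M ^ (d + 1) := by rw [pow_succ, mul_comm]
  have hcast : (((max 1 h.1.natAbs : ℕ) : ℝ≥0∞)) * ∏ i, ((max 1 ((h.2 i)).natAbs : ℕ) : ℝ≥0∞)
      ≤ ((M : ℝ≥0∞)) ^ (d + 1) := by
    calc (((max 1 h.1.natAbs : ℕ) : ℝ≥0∞)) * ∏ i, ((max 1 ((h.2 i)).natAbs : ℕ) : ℝ≥0∞)
        = (((max 1 h.1.natAbs) * ∏ i, (max 1 ((h.2 i)).natAbs) : ℕ) : ℝ≥0∞) := by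
          push_cast; ring
      _ ≤ ((M ^ (d + 1) : ℕ) : ℝ≥0∞) := by exact_mod_cast hnat
      _ = ((M : ℝ≥0∞)) ^ (d + 1) := by push_cast; ring
  have hrw : hwt h ^ (-t) = (((M : ℝ≥0∞)) ^ (d + 1)) ^ (-q) := by
    rw [hwt, ← hM, ← ENNReal.rpow_natCast ((M : ℝ≥0∞)) (d + 1), ← ENNReal.rpow_mul]
    congr 1
    push_cast
    rw [hd]; ring
  rw [hrw]
  have anti : ∀ x y : ℝ≥0∞, x ≤ y → y ^ (-q) ≤ x ^ (-q) := by
    intro x y hxy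
    rw [ENNReal.rpow_neg, ENNReal.rpow_neg]
    exact ENNReal.inv_le_inv.2 (ENNReal.rpow_le_rpow hxy hq)
  calc (((M : ℝ≥0∞)) ^ (d + 1)) ^ (-q)
      ≤ ((((max 1 h.1.natAbs : ℕ) : ℝ≥0∞)) * ∏ i, ((max 1 ((h.2 i)).natAbs : ℕ) : ℝ≥0∞)) ^ (-q) :=
        anti _ _ hcast
    _ = _ := by
        rw [ENNReal.mul_rpow_of_ne_top (by simp)
            (ENNReal.prod_lt_top (fun i _ => by simp)).ne,
          ENNReal.prod_rpow_of_ne_top (fun i _ => by simp)]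

/-- Finiteness of the weight sum over `ℤ × ℤᵈ`. -/
lemma Kfin (d : ℕ) {t : ℝ} (ht : (d : ℝ) + 1 < t) :
    ∑' h : ℤ × (Fin d → ℤ), hwt h ^ (-t) < ⊤ := by
  set q : ℝ := t / ((d : ℝ) + 1) with hqdef
  have hdpos : (0:ℝ) < (d : ℝ) + 1 := by positivity
  have hq1 : 1 < q := (lt_div_iff₀ hdpos).2 (by linarith [ht])
  have hq0 : 0 ≤ q := by linarith
  have hdq : t = q * ((d : ℝ) + 1) := by
    rw [hqdef, div_mul_cancel₀ _ hdpos.ne']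
  calc ∑' h : ℤ × (Fin d → ℤ), hwt h ^ (-t)
      ≤ ∑' h : ℤ × (Fin d → ℤ), ((max 1 h.1.natAbs : ℕ) : ℝ≥0∞) ^ (-q) *
          ∏ i, ((max 1 ((h.2 i)).natAbs : ℕ) : ℝ≥0∞) ^ (-q) :=
        ENNReal.tsum_le_tsum fun h => hwt_rpow_le t q hq0 hdq h
    _ = (∑' z : ℤ, ((max 1 z.natAbs : ℕ) : ℝ≥0∞) ^ (-q)) *
          ∑' b : Fin d → ℤ, ∏ i, ((max 1 ((b i)).natAbs : ℕ) : ℝ≥0∞) ^ (-q) := by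
        rw [ENNReal.tsum_prod']
        simp only [ENNReal.tsum_mul_left]
        rw [ENNReal.tsum_mul_right]
    _ = (∑' z : ℤ, ((max 1 z.natAbs : ℕ) : ℝ≥0∞) ^ (-q)) *
          (∑' z : ℤ, ((max 1 z.natAbs : ℕ) : ℝ≥0∞) ^ (-q)) ^ d := by
        rw [tsum_pi_prod d (fun z => ((max 1 z.natAbs : ℕ) : ℝ≥0∞) ^ (-q))]
    _ < ⊤ := by
        have := sumZ_lt_top hq1
        exact ENNReal.mul_lt_top this (ENNReal.pow_lt_top this)

/-- Finiteness of the weight sum over `ℕ × ℤᵈ`. -/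
lemma K'fin (d : ℕ) {t : ℝ} (ht : (d : ℝ) + 1 < t) :
    ∑' k : KI d, kwt k ^ (-t) < ⊤ := by
  have hinj : Injective (fun k : KI d => (((k.1 : ℤ), k.2) : ℤ × (Fin d → ℤ))) := by
    intro a b hab
    simp only [Prod.mk.injEq] at hab
    exact Prod.ext (by exact_mod_cast hab.1) hab.2
  calc ∑' k : KI d, kwt k ^ (-t)
      = ∑' k : KI d, hwt ((((k.1 : ℤ), k.2) : ℤ × (Fin d → ℤ))) ^ (-t) := by
        exact tsum_congr fun k => by rw [kwt_eq_hwt]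
    _ ≤ ∑' h : ℤ × (Fin d → ℤ), hwt h ^ (-t) :=
        ENNReal.tsum_comp_le_tsum_of_injective hinj _
    _ < ⊤ := Kfin d ht

/-- the decay coefficients of a matrix. -/
noncomputable def mA (d : ℕ) (A : II d → II d → ℂ) (σ σ' : Bool) (h : ℤ × (Fin d → ℤ)) : ℝ≥0∞ :=
  ⨆ p : {q : KI d × KI d // ksub q.1 q.2 = h},
    (‖A (σ, (p : KI d × KI d).1) (σ', (p : KI d × KI d).2)‖₊ : ℝ≥0∞)

lemma dnorm_eq (s : ℝ) (A : II d → II d → ℂ) :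
    dnorm d s A = (⨆ σ : Bool, ⨆ σ' : Bool,
      ∑' h : ℤ × (Fin d → ℤ), hwt h ^ (2 * s) * (mA d A σ σ' h) ^ (2:ℕ)) ^ (1/2:ℝ) := rfl

lemma mA_le (A : II d → II d → ℂ) (σ σ' : Bool) (k k' : KI d) :
    (‖A (σ, k) (σ', k')‖₊ : ℝ≥0∞) ≤ mA d A σ σ' (ksub k k') :=
  le_iSup_of_le ⟨(k, k'), rfl⟩ le_rfl

/-- each partial weighted sum is dominated by the square of the decay norm. -/
lemma S_le_dnorm_sq (s : ℝ) (A : II d → II d → ℂ) (σ σ' : Bool) :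
    ∑' h : ℤ × (Fin d → ℤ), hwt h ^ (2 * s) * (mA d A σ σ' h) ^ (2:ℕ)
      ≤ (dnorm d s A) ^ (2:ℕ) := by
  rw [dnorm_eq, hsq]
  exact le_iSup_of_le σ (le_iSup_of_le σ' le_rfl)

lemma V_le_vnorm_sq (s : ℝ) (v : II d → ℂ) (σ : Bool) :
    ∑' k : KI d, kwt k ^ (2 * s) * (‖v (σ, k)‖₊ : ℝ≥0∞) ^ (2:ℕ) ≤ (vnorm d s v) ^ (2:ℕ) := by
  rw [vnorm, hsq]
  exact le_iSup_of_le σ le_rfl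

lemma enn_nnorm_tsum_le {ι : Type*} (x : ι → ℂ) :
    (‖∑' i, x i‖₊ : ℝ≥0∞) ≤ ∑' i, (‖x i‖₊ : ℝ≥0∞) := by
  by_cases hsums : Summable fun i => ‖x i‖₊
  · have h1 : (‖∑' i, x i‖₊ : ℝ≥0∞) ≤ ((∑' i, ‖x i‖₊ : ℝ≥0) : ℝ≥0∞) := by
      exact_mod_cast nnnorm_tsum_le hsums
    rwa [ENNReal.coe_tsum hsums] at h1
  · have ht : ∑' i, (‖x i‖₊ : ℝ≥0∞) = ⊤ := by
      by_contra hne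
      exact hsums (ENNReal.tsum_coe_ne_top_iff_summable.1 hne)
    rw [ht]
    exact le_top

/-- the key pointwise bound on the entries of a matrix product. -/
lemma mAB_le (A B : II d → II d → ℂ) (σ σ'' : Bool) (h : ℤ × (Fin d → ℤ)) :
    mA d (mprod A B) σ σ'' h ≤
      ∑' σ' : Bool, ∑' h' : ℤ × (Fin d → ℤ), mA d A σ σ' h' * mA d B σ' σ'' (h - h') := by
  refine iSup_le fun p => ?_
  obtain ⟨⟨k, k''⟩, hp⟩ := p
  calc (‖mprod A B (σ, k) (σ'', k'')‖₊ : ℝ≥0∞)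
      ≤ ∑' i' : II d, (‖A (σ, k) i' * B i' (σ'', k'')‖₊ : ℝ≥0∞) := enn_nnorm_tsum_le _
    _ = ∑' σ' : Bool, ∑' k' : KI d,
          (‖A (σ, k) (σ', k')‖₊ : ℝ≥0∞) * (‖B (σ', k') (σ'', k'')‖₊ : ℝ≥0∞) := by
        rw [ENNReal.tsum_prod']
        exact tsum_congr fun σ' => tsum_congr fun k' => by
          rw [nnnorm_mul]; push_cast; ring
    _ ≤ ∑' σ' : Bool, ∑' k' : KI d,
          mA d A σ σ' (ksub k k') * mA d B σ' σ'' (ksub k' k'') := by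
        refine ENNReal.tsum_le_tsum fun σ' => ENNReal.tsum_le_tsum fun k' => ?_
        exact mul_le_mul' (mA_le A σ σ' k k') (mA_le B σ' σ'' k' k'')
    _ ≤ ∑' σ' : Bool, ∑' h' : ℤ × (Fin d → ℤ), mA d A σ σ' h' * mA d B σ' σ'' (h - h') := by
        refine ENNReal.tsum_le_tsum fun σ' => ?_
        have : ∀ k' : KI d, mA d A σ σ' (ksub k k') * mA d B σ' σ'' (ksub k' k'')
            = mA d A σ σ' (ksub k k') * mA d B σ' σ'' (h - ksub k k') := by
          intro k'
          congr 2
          rw [← hp, ← ksub_add k k' k'']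
          abel
        rw [tsum_congr this]
        exact ENNReal.tsum_comp_le_tsum_of_injective (ksub_inj_right k)
          (fun h' => mA d A σ σ' h' * mA d B σ' σ'' (h - h'))

/-- the key pointwise bound for matrix-vector products. -/
lemma mAv_le (A : II d → II d → ℂ) (v : II d → ℂ) (σ : Bool) (k : KI d) :
    (‖mvec A v (σ, k)‖₊ : ℝ≥0∞) ≤
      ∑' σ' : Bool, ∑' k' : KI d, mA d A σ σ' (ksub k k') * (‖v (σ', k')‖₊ : ℝ≥0∞) := by
  calc (‖mvec A v (σ, k)‖₊ : ℝ≥0∞)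
      ≤ ∑' i' : II d, (‖A (σ, k) i' * v i'‖₊ : ℝ≥0∞) := enn_nnorm_tsum_le _
    _ = ∑' σ' : Bool, ∑' k' : KI d,
          (‖A (σ, k) (σ', k')‖₊ : ℝ≥0∞) * (‖v (σ', k')‖₊ : ℝ≥0∞) := by
        rw [ENNReal.tsum_prod']
        exact tsum_congr fun σ' => tsum_congr fun k' => by
          rw [nnnorm_mul]; push_cast; ring
    _ ≤ _ := by
        refine ENNReal.tsum_le_tsum fun σ' => ENNReal.tsum_le_tsum fun k' => ?_
        exact mul_le_mul_left (mA_le A σ σ' k k') _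

/-- monotonicity of the decay norm in `s`. -/
lemma dnorm_mono {s₀ s : ℝ} (hss : s₀ ≤ s) (A : II d → II d → ℂ) :
    dnorm d s₀ A ≤ dnorm d s A := by
  rw [dnorm_eq, dnorm_eq]
  refine ENNReal.rpow_le_rpow ?_ (by norm_num)
  refine iSup_mono fun σ => iSup_mono fun σ' => ENNReal.tsum_le_tsum fun h => ?_
  refine mul_le_mul_left (ENNReal.rpow_le_rpow_of_exponent_le ?_ (by linarith)) _
  rw [hwt]
  exact_mod_cast Nat.one_le_cast.2 (le_max_left _ _)

lemma vnorm_mono {s₀ s : ℝ} (hss : s₀ ≤ s) (v : II d → ℂ) :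
    vnorm d s₀ v ≤ vnorm d s v := by
  rw [vnorm, vnorm]
  refine ENNReal.rpow_le_rpow ?_ (by norm_num)
  refine iSup_mono fun σ => ENNReal.tsum_le_tsum fun k => ?_
  refine mul_le_mul_left (ENNReal.rpow_le_rpow_of_exponent_le ?_ (by linarith)) _
  rw [kwt]
  exact_mod_cast Nat.one_le_cast.2 (le_max_left _ _)

lemma rpow_two_mul (x : ℝ≥0∞) (s : ℝ) : x ^ (2*s) = (x ^ s) ^ (2:ℕ) := by
  rw [← ENNReal.rpow_natCast (x ^ s), ← ENNReal.rpow_mul]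
  congr 1
  push_cast
  ring

/-- Main estimate for the matrix product, one pair of signs. -/
lemma key_mat {s₀ s : ℝ} (h0 : 0 ≤ s₀) (hss : s₀ ≤ s) (A B : II d → II d → ℂ) (σ σ'' : Bool) :
    ∑' h : ℤ × (Fin d → ℤ), hwt h ^ (2*s) * (mA d (mprod A B) σ σ'' h) ^ (2:ℕ)
      ≤ (2:ℝ≥0∞) ^ s * (2:ℝ≥0∞) ^ s * 64 * (∑' h : ℤ × (Fin d → ℤ), hwt h ^ (-(2*s₀))) *
        (dnorm d s₀ A * dnorm d s B + dnorm d s A * dnorm d s₀ B) ^ (2:ℕ) := by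
  have hs0 : 0 ≤ s := le_trans h0 hss
  set G := ℤ × (Fin d → ℤ)
  set K : ℝ≥0∞ := ∑' h : G, hwt h ^ (-(2*s₀)) with hK
  set P1 : Bool → G → ℝ≥0∞ :=
    fun σ' h => ∑' h' : G, mA d B σ' σ'' (h - h') * (hwt h' ^ s * mA d A σ σ' h') with hP1
  set P2 : Bool → G → ℝ≥0∞ :=
    fun σ' h => ∑' h' : G, (hwt (h - h') ^ s * mA d B σ' σ'' (h - h')) * mA d A σ σ' h' with hP2
  -- Step A : pointwise bound
  have stepA : ∀ h : G, hwt h ^ (2*s) * (mA d (mprod A B) σ σ'' h) ^ (2:ℕ)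
      ≤ ((2:ℝ≥0∞) ^ s) ^ (2:ℕ) *
        ((P1 false h + P2 false h) + (P1 true h + P2 true h)) ^ (2:ℕ) := by
    intro h
    rw [rpow_two_mul, ← mul_pow, ← mul_pow]
    refine pow_le_pow_left' ?_ 2
    calc hwt h ^ s * mA d (mprod A B) σ σ'' h
        ≤ hwt h ^ s * ∑' σ' : Bool, ∑' h' : G, mA d A σ σ' h' * mA d B σ' σ'' (h - h') :=
          mul_le_mul_right (mAB_le A B σ σ'' h) _
      _ = ∑' σ' : Bool, ∑' h' : G, hwt h ^ s * (mA d A σ σ' h' * mA d B σ' σ'' (h - h')) := by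
          rw [← ENNReal.tsum_mul_left]
          exact tsum_congr fun σ' => by rw [← ENNReal.tsum_mul_left]
      _ ≤ ∑' σ' : Bool, ((2:ℝ≥0∞) ^ s * (P1 σ' h + P2 σ' h)) := by
          refine ENNReal.tsum_le_tsum fun σ' => ?_
          have hbd : ∀ h' : G, hwt h ^ s * (mA d A σ σ' h' * mA d B σ' σ'' (h - h'))
              ≤ (2:ℝ≥0∞) ^ s * ((mA d B σ' σ'' (h - h') * (hwt h' ^ s * mA d A σ σ' h')) +
                ((hwt (h - h') ^ s * mA d B σ' σ'' (h - h')) * mA d A σ σ' h')) := by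
            intro h'
            have hsplit : hwt h ^ s ≤ (2:ℝ≥0∞) ^ s * (hwt h' ^ s + hwt (h - h') ^ s) := by
              refine wsplit hs0 ?_
              have : h = h' + (h - h') := by abel
              calc hwt h = hwt (h' + (h - h')) := by rw [← this]
                _ ≤ hwt h' + hwt (h - h') := hwt_add _ _
            calc hwt h ^ s * (mA d A σ σ' h' * mA d B σ' σ'' (h - h'))
                ≤ ((2:ℝ≥0∞) ^ s * (hwt h' ^ s + hwt (h - h') ^ s)) *
                  (mA d A σ σ' h' * mA d B σ' σ'' (h - h')) := mul_le_mul_left hsplit _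
              _ = (2:ℝ≥0∞) ^ s * ((mA d B σ' σ'' (h - h') * (hwt h' ^ s * mA d A σ σ' h')) +
                  ((hwt (h - h') ^ s * mA d B σ' σ'' (h - h')) * mA d A σ σ' h')) := by ring
          calc ∑' h' : G, hwt h ^ s * (mA d A σ σ' h' * mA d B σ' σ'' (h - h'))
              ≤ ∑' h' : G, (2:ℝ≥0∞) ^ s *
                  ((mA d B σ' σ'' (h - h') * (hwt h' ^ s * mA d A σ σ' h')) +
                  ((hwt (h - h') ^ s * mA d B σ' σ'' (h - h')) * mA d A σ σ' h')) :=
                ENNReal.tsum_le_tsum hbd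
            _ = (2:ℝ≥0∞) ^ s * (P1 σ' h + P2 σ' h) := by
                rw [ENNReal.tsum_mul_left, hP1, hP2, ENNReal.tsum_add]
      _ = (2:ℝ≥0∞) ^ s * ((P1 false h + P2 false h) + (P1 true h + P2 true h)) := by
          rw [tsum_bool, ← mul_add]
  -- Step B : sum the squares
  have stepB : ∑' h : G, hwt h ^ (2*s) * (mA d (mprod A B) σ σ'' h) ^ (2:ℕ)
      ≤ ((2:ℝ≥0∞) ^ s) ^ (2:ℕ) * 16 *
        ((∑' h : G, P1 false h ^ (2:ℕ)) + (∑' h : G, P2 false h ^ (2:ℕ)) +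
         (∑' h : G, P1 true h ^ (2:ℕ)) + (∑' h : G, P2 true h ^ (2:ℕ))) := by
    calc ∑' h : G, hwt h ^ (2*s) * (mA d (mprod A B) σ σ'' h) ^ (2:ℕ)
        ≤ ∑' h : G, ((2:ℝ≥0∞) ^ s) ^ (2:ℕ) *
            ((P1 false h + P2 false h) + (P1 true h + P2 true h)) ^ (2:ℕ) :=
          ENNReal.tsum_le_tsum stepA
      _ ≤ ∑' h : G, ((2:ℝ≥0∞) ^ s) ^ (2:ℕ) * (16 *
            (P1 false h ^ (2:ℕ) + P2 false h ^ (2:ℕ) + P1 true h ^ (2:ℕ) + P2 true h ^ (2:ℕ))) :=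
          ENNReal.tsum_le_tsum fun h => mul_le_mul_right (sq_add4_le _ _ _ _) _
      _ = ((2:ℝ≥0∞) ^ s) ^ (2:ℕ) * 16 *
            ∑' h : G, (P1 false h ^ (2:ℕ) + P2 false h ^ (2:ℕ) + P1 true h ^ (2:ℕ) +
              P2 true h ^ (2:ℕ)) := by
          simp only [ENNReal.tsum_mul_left]
          ring
      _ = _ := by
          rw [ENNReal.tsum_add, ENNReal.tsum_add, ENNReal.tsum_add]
  -- Step C : Young for P1
  have hinj1 : ∀ h' : G, Injective (fun h : G => h - h') := fun h' => sub_left_injective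
  have hinj2 : ∀ h : G, Injective (fun h' : G => h - h') := fun h => sub_right_injective
  have stepC : ∀ σ' : Bool, ∑' h : G, P1 σ' h ^ (2:ℕ)
      ≤ K * (dnorm d s₀ B) ^ (2:ℕ) * (dnorm d s A) ^ (2:ℕ) := by
    intro σ'
    have hY := youngF (fun h h' : G => h - h') hinj1 hinj2
      (fun c => mA d B σ' σ'' c) (fun h' => hwt h' ^ s * mA d A σ σ' h')
    have hl1 : (∑' c : G, mA d B σ' σ'' c) ^ (2:ℕ) ≤ K * (dnorm d s₀ B) ^ (2:ℕ) := by
      calc (∑' c : G, mA d B σ' σ'' c) ^ (2:ℕ)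
          ≤ K * (∑' c : G, hwt c ^ (2*s₀) * mA d B σ' σ'' c ^ (2:ℕ)) :=
            l1sq hwt _ hwt_ne_zero hwt_ne_top s₀
        _ ≤ K * (dnorm d s₀ B) ^ (2:ℕ) := mul_le_mul_right (S_le_dnorm_sq s₀ B σ' σ'') _
    have hG2 : (∑' h' : G, (hwt h' ^ s * mA d A σ σ' h') ^ (2:ℕ)) ≤ (dnorm d s A) ^ (2:ℕ) := by
      calc (∑' h' : G, (hwt h' ^ s * mA d A σ σ' h') ^ (2:ℕ))
          = ∑' h' : G, hwt h' ^ (2*s) * mA d A σ σ' h' ^ (2:ℕ) := by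
            exact tsum_congr fun h' => by rw [mul_pow, rpow_two_mul]
        _ ≤ (dnorm d s A) ^ (2:ℕ) := S_le_dnorm_sq s A σ σ'
    calc ∑' h : G, P1 σ' h ^ (2:ℕ)
        ≤ (∑' c : G, mA d B σ' σ'' c) ^ (2:ℕ) *
            (∑' h' : G, (hwt h' ^ s * mA d A σ σ' h') ^ (2:ℕ)) := hY
      _ ≤ (K * (dnorm d s₀ B) ^ (2:ℕ)) * (dnorm d s A) ^ (2:ℕ) := mul_le_mul' hl1 hG2
      _ = _ := by ring
  -- Step D : Young for P2
  have stepD : ∀ σ' : Bool, ∑' h : G, P2 σ' h ^ (2:ℕ)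
      ≤ (dnorm d s B) ^ (2:ℕ) * (K * (dnorm d s₀ A) ^ (2:ℕ)) := by
    intro σ'
    have hY := youngG (fun h h' : G => h - h') hinj1
      (fun c => hwt c ^ s * mA d B σ' σ'' c) (fun h' => mA d A σ σ' h')
    have hF2 : (∑' c : G, (hwt c ^ s * mA d B σ' σ'' c) ^ (2:ℕ)) ≤ (dnorm d s B) ^ (2:ℕ) := by
      calc (∑' c : G, (hwt c ^ s * mA d B σ' σ'' c) ^ (2:ℕ))
          = ∑' c : G, hwt c ^ (2*s) * mA d B σ' σ'' c ^ (2:ℕ) :=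
            tsum_congr fun c => by rw [mul_pow, rpow_two_mul]
        _ ≤ (dnorm d s B) ^ (2:ℕ) := S_le_dnorm_sq s B σ' σ''
    have hl1 : (∑' h' : G, mA d A σ σ' h') ^ (2:ℕ) ≤ K * (dnorm d s₀ A) ^ (2:ℕ) := by
      calc (∑' h' : G, mA d A σ σ' h') ^ (2:ℕ)
          ≤ K * (∑' h' : G, hwt h' ^ (2*s₀) * mA d A σ σ' h' ^ (2:ℕ)) :=
            l1sq hwt _ hwt_ne_zero hwt_ne_top s₀
        _ ≤ K * (dnorm d s₀ A) ^ (2:ℕ) := mul_le_mul_right (S_le_dnorm_sq s₀ A σ σ') _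
    exact le_trans hY (mul_le_mul' hF2 hl1)
  -- Step E : combine
  set X := dnorm d s₀ A * dnorm d s B with hX
  set Y := dnorm d s A * dnorm d s₀ B with hYdef
  have hXY : ∀ σ' : Bool,
      (∑' h : G, P1 σ' h ^ (2:ℕ)) + (∑' h : G, P2 σ' h ^ (2:ℕ))
        ≤ K * (X + Y) ^ (2:ℕ) + K * (X + Y) ^ (2:ℕ) := by
    intro σ'
    have c1 : ∑' h : G, P1 σ' h ^ (2:ℕ) ≤ K * (X + Y) ^ (2:ℕ) := by
      refine le_trans (stepC σ') ?_
      rw [mul_assoc]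
      refine mul_le_mul_right ?_ K
      calc (dnorm d s₀ B) ^ (2:ℕ) * (dnorm d s A) ^ (2:ℕ) = Y ^ (2:ℕ) := by
            rw [hYdef, mul_pow]; ring
        _ ≤ (X + Y) ^ (2:ℕ) := pow_le_pow_left' le_add_self 2
    have c2 : ∑' h : G, P2 σ' h ^ (2:ℕ) ≤ K * (X + Y) ^ (2:ℕ) := by
      refine le_trans (stepD σ') ?_
      calc (dnorm d s B) ^ (2:ℕ) * (K * (dnorm d s₀ A) ^ (2:ℕ))
          = K * ((dnorm d s₀ A * dnorm d s B) ^ (2:ℕ)) := by rw [mul_pow]; ring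
        _ ≤ K * (X + Y) ^ (2:ℕ) := by
            rw [← hX]
            exact mul_le_mul_right (pow_le_pow_left' (le_add_right le_rfl) 2) K
    exact add_le_add c1 c2
  calc ∑' h : G, hwt h ^ (2*s) * (mA d (mprod A B) σ σ'' h) ^ (2:ℕ)
      ≤ ((2:ℝ≥0∞) ^ s) ^ (2:ℕ) * 16 *
        ((∑' h : G, P1 false h ^ (2:ℕ)) + (∑' h : G, P2 false h ^ (2:ℕ)) +
         (∑' h : G, P1 true h ^ (2:ℕ)) + (∑' h : G, P2 true h ^ (2:ℕ))) := stepB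
    _ ≤ ((2:ℝ≥0∞) ^ s) ^ (2:ℕ) * 16 *
        ((K * (X + Y) ^ (2:ℕ) + K * (X + Y) ^ (2:ℕ)) +
         (K * (X + Y) ^ (2:ℕ) + K * (X + Y) ^ (2:ℕ))) := by
        refine mul_le_mul_right ?_ _
        have h1 := hXY false
        have h2 := hXY true
        calc (∑' h : G, P1 false h ^ (2:ℕ)) + (∑' h : G, P2 false h ^ (2:ℕ)) +
             (∑' h : G, P1 true h ^ (2:ℕ)) + (∑' h : G, P2 true h ^ (2:ℕ))
            = ((∑' h : G, P1 false h ^ (2:ℕ)) + (∑' h : G, P2 false h ^ (2:ℕ))) +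
              ((∑' h : G, P1 true h ^ (2:ℕ)) + (∑' h : G, P2 true h ^ (2:ℕ))) := by ring
          _ ≤ _ := add_le_add h1 h2
    _ = (2:ℝ≥0∞) ^ s * (2:ℝ≥0∞) ^ s * 64 * K * (X + Y) ^ (2:ℕ) := by ring

/-- Main estimate for the matrix-vector product, one sign. -/
lemma key_vec {s₀ s : ℝ} (h0 : 0 ≤ s₀) (hss : s₀ ≤ s) (A : II d → II d → ℂ) (v : II d → ℂ)
    (σ : Bool) :
    ∑' k : KI d, kwt k ^ (2*s) * (‖mvec A v (σ, k)‖₊ : ℝ≥0∞) ^ (2:ℕ)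
      ≤ (2:ℝ≥0∞) ^ s * (2:ℝ≥0∞) ^ s * 64 *
        ((∑' h : ℤ × (Fin d → ℤ), hwt h ^ (-(2*s₀))) + (∑' k : KI d, kwt k ^ (-(2*s₀)))) *
        (dnorm d s₀ A * vnorm d s v + dnorm d s A * vnorm d s₀ v) ^ (2:ℕ) := by
  have hs0 : 0 ≤ s := le_trans h0 hss
  set G := ℤ × (Fin d → ℤ)
  set K : ℝ≥0∞ := ∑' h : G, hwt h ^ (-(2*s₀)) with hK
  set K' : ℝ≥0∞ := ∑' k : KI d, kwt k ^ (-(2*s₀)) with hK'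
  set P1 : Bool → KI d → ℝ≥0∞ :=
    fun σ' k => ∑' k' : KI d,
      (hwt (ksub k k') ^ s * mA d A σ σ' (ksub k k')) * (‖v (σ', k')‖₊ : ℝ≥0∞) with hP1
  set P2 : Bool → KI d → ℝ≥0∞ :=
    fun σ' k => ∑' k' : KI d,
      mA d A σ σ' (ksub k k') * (kwt k' ^ s * (‖v (σ', k')‖₊ : ℝ≥0∞)) with hP2
  have stepA : ∀ k : KI d, kwt k ^ (2*s) * (‖mvec A v (σ, k)‖₊ : ℝ≥0∞) ^ (2:ℕ)
      ≤ ((2:ℝ≥0∞) ^ s) ^ (2:ℕ) *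
        ((P1 false k + P2 false k) + (P1 true k + P2 true k)) ^ (2:ℕ) := by
    intro k
    rw [rpow_two_mul, ← mul_pow, ← mul_pow]
    refine pow_le_pow_left' ?_ 2
    calc kwt k ^ s * (‖mvec A v (σ, k)‖₊ : ℝ≥0∞)
        ≤ kwt k ^ s * ∑' σ' : Bool, ∑' k' : KI d,
            mA d A σ σ' (ksub k k') * (‖v (σ', k')‖₊ : ℝ≥0∞) :=
          mul_le_mul_right (mAv_le A v σ k) _
      _ = ∑' σ' : Bool, ∑' k' : KI d,
            kwt k ^ s * (mA d A σ σ' (ksub k k') * (‖v (σ', k')‖₊ : ℝ≥0∞)) := by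
          rw [← ENNReal.tsum_mul_left]
          exact tsum_congr fun σ' => by rw [← ENNReal.tsum_mul_left]
      _ ≤ ∑' σ' : Bool, ((2:ℝ≥0∞) ^ s * (P1 σ' k + P2 σ' k)) := by
          refine ENNReal.tsum_le_tsum fun σ' => ?_
          have hbd : ∀ k' : KI d,
              kwt k ^ s * (mA d A σ σ' (ksub k k') * (‖v (σ', k')‖₊ : ℝ≥0∞))
              ≤ (2:ℝ≥0∞) ^ s *
                (((hwt (ksub k k') ^ s * mA d A σ σ' (ksub k k')) * (‖v (σ', k')‖₊ : ℝ≥0∞)) +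
                 (mA d A σ σ' (ksub k k') * (kwt k' ^ s * (‖v (σ', k')‖₊ : ℝ≥0∞)))) := by
            intro k'
            have hsplit : kwt k ^ s ≤ (2:ℝ≥0∞) ^ s * (hwt (ksub k k') ^ s + kwt k' ^ s) :=
              wsplit hs0 (kwt_le k k')
            calc kwt k ^ s * (mA d A σ σ' (ksub k k') * (‖v (σ', k')‖₊ : ℝ≥0∞))
                ≤ ((2:ℝ≥0∞) ^ s * (hwt (ksub k k') ^ s + kwt k' ^ s)) *
                  (mA d A σ σ' (ksub k k') * (‖v (σ', k')‖₊ : ℝ≥0∞)) := mul_le_mul_left hsplit _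
              _ = (2:ℝ≥0∞) ^ s *
                  (((hwt (ksub k k') ^ s * mA d A σ σ' (ksub k k')) * (‖v (σ', k')‖₊ : ℝ≥0∞)) +
                   (mA d A σ σ' (ksub k k') * (kwt k' ^ s * (‖v (σ', k')‖₊ : ℝ≥0∞)))) := by ring
          calc ∑' k' : KI d, kwt k ^ s * (mA d A σ σ' (ksub k k') * (‖v (σ', k')‖₊ : ℝ≥0∞))
              ≤ ∑' k' : KI d, (2:ℝ≥0∞) ^ s *
                (((hwt (ksub k k') ^ s * mA d A σ σ' (ksub k k')) * (‖v (σ', k')‖₊ : ℝ≥0∞)) +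
                 (mA d A σ σ' (ksub k k') * (kwt k' ^ s * (‖v (σ', k')‖₊ : ℝ≥0∞)))) :=
                ENNReal.tsum_le_tsum hbd
            _ = (2:ℝ≥0∞) ^ s * (P1 σ' k + P2 σ' k) := by
                rw [ENNReal.tsum_mul_left, hP1, hP2, ENNReal.tsum_add]
      _ = (2:ℝ≥0∞) ^ s * ((P1 false k + P2 false k) + (P1 true k + P2 true k)) := by
          rw [tsum_bool, ← mul_add]
  have stepB : ∑' k : KI d, kwt k ^ (2*s) * (‖mvec A v (σ, k)‖₊ : ℝ≥0∞) ^ (2:ℕ)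
      ≤ ((2:ℝ≥0∞) ^ s) ^ (2:ℕ) * 16 *
        ((∑' k : KI d, P1 false k ^ (2:ℕ)) + (∑' k : KI d, P2 false k ^ (2:ℕ)) +
         (∑' k : KI d, P1 true k ^ (2:ℕ)) + (∑' k : KI d, P2 true k ^ (2:ℕ))) := by
    calc ∑' k : KI d, kwt k ^ (2*s) * (‖mvec A v (σ, k)‖₊ : ℝ≥0∞) ^ (2:ℕ)
        ≤ ∑' k : KI d, ((2:ℝ≥0∞) ^ s) ^ (2:ℕ) *
            ((P1 false k + P2 false k) + (P1 true k + P2 true k)) ^ (2:ℕ) :=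
          ENNReal.tsum_le_tsum stepA
      _ ≤ ∑' k : KI d, ((2:ℝ≥0∞) ^ s) ^ (2:ℕ) * (16 *
            (P1 false k ^ (2:ℕ) + P2 false k ^ (2:ℕ) + P1 true k ^ (2:ℕ) + P2 true k ^ (2:ℕ))) :=
          ENNReal.tsum_le_tsum fun k => mul_le_mul_right (sq_add4_le _ _ _ _) _
      _ = ((2:ℝ≥0∞) ^ s) ^ (2:ℕ) * 16 *
            ∑' k : KI d, (P1 false k ^ (2:ℕ) + P2 false k ^ (2:ℕ) + P1 true k ^ (2:ℕ) +
              P2 true k ^ (2:ℕ)) := by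
          simp only [ENNReal.tsum_mul_left]
          ring
      _ = _ := by
          rw [ENNReal.tsum_add, ENNReal.tsum_add, ENNReal.tsum_add]
  -- Young for P1 (ℓ¹ on v)
  have stepC : ∀ σ' : Bool, ∑' k : KI d, P1 σ' k ^ (2:ℕ)
      ≤ (dnorm d s A) ^ (2:ℕ) * (K' * (vnorm d s₀ v) ^ (2:ℕ)) := by
    intro σ'
    have hY := youngG (fun k k' : KI d => ksub k k') ksub_inj_left
      (fun c => hwt c ^ s * mA d A σ σ' c) (fun k' => (‖v (σ', k')‖₊ : ℝ≥0∞))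
    have hF2 : (∑' c : G, (hwt c ^ s * mA d A σ σ' c) ^ (2:ℕ)) ≤ (dnorm d s A) ^ (2:ℕ) := by
      calc (∑' c : G, (hwt c ^ s * mA d A σ σ' c) ^ (2:ℕ))
          = ∑' c : G, hwt c ^ (2*s) * mA d A σ σ' c ^ (2:ℕ) :=
            tsum_congr fun c => by rw [mul_pow, rpow_two_mul]
        _ ≤ (dnorm d s A) ^ (2:ℕ) := S_le_dnorm_sq s A σ σ'
    have hl1 : (∑' k' : KI d, (‖v (σ', k')‖₊ : ℝ≥0∞)) ^ (2:ℕ)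
        ≤ K' * (vnorm d s₀ v) ^ (2:ℕ) := by
      calc (∑' k' : KI d, (‖v (σ', k')‖₊ : ℝ≥0∞)) ^ (2:ℕ)
          ≤ K' * (∑' k' : KI d, kwt k' ^ (2*s₀) * (‖v (σ', k')‖₊ : ℝ≥0∞) ^ (2:ℕ)) :=
            l1sq kwt _ kwt_ne_zero kwt_ne_top s₀
        _ ≤ K' * (vnorm d s₀ v) ^ (2:ℕ) := mul_le_mul_right (V_le_vnorm_sq s₀ v σ') _
    exact le_trans hY (mul_le_mul' hF2 hl1)
  -- Young for P2 (ℓ¹ on the matrix coefficients)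
  have stepD : ∀ σ' : Bool, ∑' k : KI d, P2 σ' k ^ (2:ℕ)
      ≤ (K * (dnorm d s₀ A) ^ (2:ℕ)) * (vnorm d s v) ^ (2:ℕ) := by
    intro σ'
    have hY := youngF (fun k k' : KI d => ksub k k') ksub_inj_left ksub_inj_right
      (fun c => mA d A σ σ' c) (fun k' => kwt k' ^ s * (‖v (σ', k')‖₊ : ℝ≥0∞))
    have hl1 : (∑' c : G, mA d A σ σ' c) ^ (2:ℕ) ≤ K * (dnorm d s₀ A) ^ (2:ℕ) := by
      calc (∑' c : G, mA d A σ σ' c) ^ (2:ℕ)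
          ≤ K * (∑' c : G, hwt c ^ (2*s₀) * mA d A σ σ' c ^ (2:ℕ)) :=
            l1sq hwt _ hwt_ne_zero hwt_ne_top s₀
        _ ≤ K * (dnorm d s₀ A) ^ (2:ℕ) := mul_le_mul_right (S_le_dnorm_sq s₀ A σ σ') _
    have hG2 : (∑' k' : KI d, (kwt k' ^ s * (‖v (σ', k')‖₊ : ℝ≥0∞)) ^ (2:ℕ))
        ≤ (vnorm d s v) ^ (2:ℕ) := by
      calc (∑' k' : KI d, (kwt k' ^ s * (‖v (σ', k')‖₊ : ℝ≥0∞)) ^ (2:ℕ))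
          = ∑' k' : KI d, kwt k' ^ (2*s) * (‖v (σ', k')‖₊ : ℝ≥0∞) ^ (2:ℕ) :=
            tsum_congr fun k' => by rw [mul_pow, rpow_two_mul]
        _ ≤ (vnorm d s v) ^ (2:ℕ) := V_le_vnorm_sq s v σ'
    exact le_trans hY (mul_le_mul' hl1 hG2)
  -- combine
  set X := dnorm d s₀ A * vnorm d s v with hX
  set Y := dnorm d s A * vnorm d s₀ v with hYdef
  have hXY : ∀ σ' : Bool,
      (∑' k : KI d, P1 σ' k ^ (2:ℕ)) + (∑' k : KI d, P2 σ' k ^ (2:ℕ))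
        ≤ (K + K') * (X + Y) ^ (2:ℕ) + (K + K') * (X + Y) ^ (2:ℕ) := by
    intro σ'
    have c1 : ∑' k : KI d, P1 σ' k ^ (2:ℕ) ≤ (K + K') * (X + Y) ^ (2:ℕ) := by
      refine le_trans (stepC σ') ?_
      calc (dnorm d s A) ^ (2:ℕ) * (K' * (vnorm d s₀ v) ^ (2:ℕ))
          = K' * (Y ^ (2:ℕ)) := by rw [hYdef, mul_pow]; ring
        _ ≤ (K + K') * ((X + Y) ^ (2:ℕ)) :=
            mul_le_mul' (le_add_self) (pow_le_pow_left' le_add_self 2)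
    have c2 : ∑' k : KI d, P2 σ' k ^ (2:ℕ) ≤ (K + K') * (X + Y) ^ (2:ℕ) := by
      refine le_trans (stepD σ') ?_
      calc (K * (dnorm d s₀ A) ^ (2:ℕ)) * (vnorm d s v) ^ (2:ℕ)
          = K * (X ^ (2:ℕ)) := by rw [hX, mul_pow]; ring
        _ ≤ (K + K') * ((X + Y) ^ (2:ℕ)) :=
            mul_le_mul' (le_add_right le_rfl) (pow_le_pow_left' (le_add_right le_rfl) 2)
    exact add_le_add c1 c2
  calc ∑' k : KI d, kwt k ^ (2*s) * (‖mvec A v (σ, k)‖₊ : ℝ≥0∞) ^ (2:ℕ)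
      ≤ ((2:ℝ≥0∞) ^ s) ^ (2:ℕ) * 16 *
        ((∑' k : KI d, P1 false k ^ (2:ℕ)) + (∑' k : KI d, P2 false k ^ (2:ℕ)) +
         (∑' k : KI d, P1 true k ^ (2:ℕ)) + (∑' k : KI d, P2 true k ^ (2:ℕ))) := stepB
    _ ≤ ((2:ℝ≥0∞) ^ s) ^ (2:ℕ) * 16 *
        (((K + K') * (X + Y) ^ (2:ℕ) + (K + K') * (X + Y) ^ (2:ℕ)) +
         ((K + K') * (X + Y) ^ (2:ℕ) + (K + K') * (X + Y) ^ (2:ℕ))) := by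
        refine mul_le_mul_right ?_ _
        calc (∑' k : KI d, P1 false k ^ (2:ℕ)) + (∑' k : KI d, P2 false k ^ (2:ℕ)) +
             (∑' k : KI d, P1 true k ^ (2:ℕ)) + (∑' k : KI d, P2 true k ^ (2:ℕ))
            = ((∑' k : KI d, P1 false k ^ (2:ℕ)) + (∑' k : KI d, P2 false k ^ (2:ℕ))) +
              ((∑' k : KI d, P1 true k ^ (2:ℕ)) + (∑' k : KI d, P2 true k ^ (2:ℕ))) := by ring
          _ ≤ _ := add_le_add (hXY false) (hXY true)
    _ = (2:ℝ≥0∞) ^ s * (2:ℝ≥0∞) ^ s * 64 * (K + K') * (X + Y) ^ (2:ℕ) := by ring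

end DNI

open DNI

/-- Interpolation estimates for the decay norm: for `s ≥ s₀ > (d+1)/2` there are
constants `C(s) ≥ C(s₀) ≥ 1` such that `|AB|ₛ ≤ C(s)|A|_{s₀}|B|ₛ + C(s₀)|A|ₛ|B|_{s₀}`,
`|AB|ₛ ≤ C(s)|A|ₛ|B|ₛ` and `‖Av‖ₛ ≤ C(s)(|A|_{s₀}‖v‖ₛ + |A|ₛ‖v‖_{s₀})`. -/
theorem decay_norm_interpolation (d : ℕ) (hd : 1 ≤ d) (s₀ s : ℝ)
    (hs₀ : ((d : ℝ) + 1) / 2 < s₀) (hs : s₀ ≤ s) :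
    ∃ C₀ C : ℝ, 1 ≤ C₀ ∧ C₀ ≤ C ∧
      ∀ (A B : II d → II d → ℂ) (v : II d → ℂ),
        dnorm d s₀ A < ⊤ → dnorm d s A < ⊤ → dnorm d s₀ B < ⊤ → dnorm d s B < ⊤ →
        (∀ i i'' : II d, Summable fun i' : II d => A i i' * B i' i'') →
        (∀ i : II d, Summable fun i' : II d => A i i' * v i') →
        dnorm d s (mprod A B) ≤
            ENNReal.ofReal C * dnorm d s₀ A * dnorm d s B +
              ENNReal.ofReal C₀ * dnorm d s A * dnorm d s₀ B ∧
        dnorm d s (mprod A B) ≤ ENNReal.ofReal C * dnorm d s A * dnorm d s B ∧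
        vnorm d s (mvec A v) ≤
          ENNReal.ofReal C * (dnorm d s₀ A * vnorm d s v + dnorm d s A * vnorm d s₀ v) := by
  have hd0 : (0:ℝ) ≤ (d:ℝ) + 1 := by positivity
  have h00 : 0 < s₀ := lt_of_le_of_lt (by positivity) hs₀
  have h0 : 0 ≤ s₀ := h00.le
  have hs0 : 0 ≤ s := le_trans h0 hs
  have ht : (d:ℝ) + 1 < 2 * s₀ := by linarith
  set K : ℝ≥0∞ := ∑' h : ℤ × (Fin d → ℤ), hwt h ^ (-(2*s₀)) with hK
  set K' : ℝ≥0∞ := ∑' k : KI d, kwt k ^ (-(2*s₀)) with hK'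
  have hKfin : K ≠ ⊤ := (Kfin d ht).ne
  have hK'fin : K' ≠ ⊤ := (K'fin d ht).ne
  set Γ : ℝ≥0∞ := (2:ℝ≥0∞) ^ s * 8 * ((K + K') + 1) ^ (1/2:ℝ) with hΓ
  have hΓtop : Γ ≠ ⊤ := by
    rw [hΓ]
    refine ENNReal.mul_ne_top (ENNReal.mul_ne_top ?_ (by norm_num)) ?_
    · exact (ENNReal.rpow_lt_top_of_nonneg hs0 (by norm_num)).ne
    · refine (ENNReal.rpow_lt_top_of_nonneg (by norm_num) ?_).ne
      rw [← lt_top_iff_ne_top]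
      refine ENNReal.add_lt_top.2 ⟨ENNReal.add_lt_top.2 ⟨?_, ?_⟩, ?_⟩ <;>
        simp [lt_top_iff_ne_top, hKfin, hK'fin]
  have hone : (1:ℝ≥0∞) ≤ Γ := by
    rw [hΓ]
    calc (1:ℝ≥0∞) = 1 * 1 * 1 := by norm_num
      _ ≤ (2:ℝ≥0∞) ^ s * 8 * ((K + K') + 1) ^ (1/2:ℝ) := by
          refine mul_le_mul' (mul_le_mul' ?_ (by norm_num)) ?_
          · calc (1:ℝ≥0∞) = (2:ℝ≥0∞) ^ (0:ℝ) := by rw [ENNReal.rpow_zero]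
              _ ≤ (2:ℝ≥0∞) ^ s := ENNReal.rpow_le_rpow_of_exponent_le (by norm_num) hs0
          · calc (1:ℝ≥0∞) = (1:ℝ≥0∞) ^ (1/2:ℝ) := by rw [ENNReal.one_rpow]
              _ ≤ ((K + K') + 1) ^ (1/2:ℝ) :=
                ENNReal.rpow_le_rpow (le_add_self) (by norm_num)
  have h2Γ : 2 * Γ ≠ ⊤ := ENNReal.mul_ne_top (by norm_num) hΓtop
  set C : ℝ := (2 * Γ).toReal with hCdef
  have hC : ENNReal.ofReal C = 2 * Γ := ENNReal.ofReal_toReal h2Γ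
  have hC1 : 1 ≤ C := by
    rw [hCdef, ← ENNReal.toReal_one]
    refine ENNReal.toReal_mono h2Γ ?_
    calc (1:ℝ≥0∞) ≤ Γ := hone
      _ = 1 * Γ := (one_mul Γ).symm
      _ ≤ 2 * Γ := mul_le_mul_left (by norm_num) Γ
  have hΓsq : Γ ^ (2:ℕ) = (2:ℝ≥0∞) ^ s * (2:ℝ≥0∞) ^ s * 64 * ((K + K') + 1) := by
    rw [hΓ, mul_pow, mul_pow, hsq, pow_two]
    norm_num
  refine ⟨C, C, hC1, le_rfl, ?_⟩
  intro A B v _ _ _ _ _ _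
  set X := dnorm d s₀ A * dnorm d s B with hX
  set Y := dnorm d s A * dnorm d s₀ B with hY
  have dmat : dnorm d s (mprod A B) ≤ Γ * (X + Y) := by
    have hsup : (⨆ σ : Bool, ⨆ σ'' : Bool,
        ∑' h : ℤ × (Fin d → ℤ), hwt h ^ (2 * s) * (mA d (mprod A B) σ σ'' h) ^ (2:ℕ))
        ≤ (Γ * (X + Y)) ^ (2:ℕ) := by
      refine iSup_le fun σ => iSup_le fun σ'' => ?_
      calc ∑' h : ℤ × (Fin d → ℤ), hwt h ^ (2 * s) * (mA d (mprod A B) σ σ'' h) ^ (2:ℕ)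
          ≤ (2:ℝ≥0∞) ^ s * (2:ℝ≥0∞) ^ s * 64 * K * (X + Y) ^ (2:ℕ) :=
            key_mat h0 hs A B σ σ''
        _ ≤ (2:ℝ≥0∞) ^ s * (2:ℝ≥0∞) ^ s * 64 * ((K + K') + 1) * (X + Y) ^ (2:ℕ) := by
            refine mul_le_mul_left (mul_le_mul_right ?_ _) _
            exact le_add_right (le_add_right le_rfl)
        _ = (Γ * (X + Y)) ^ (2:ℕ) := by rw [mul_pow, hΓsq]
    calc dnorm d s (mprod A B)
        = (⨆ σ : Bool, ⨆ σ'' : Bool,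
            ∑' h : ℤ × (Fin d → ℤ), hwt h ^ (2 * s) * (mA d (mprod A B) σ σ'' h) ^ (2:ℕ)) ^
          (1/2:ℝ) := dnorm_eq s (mprod A B)
      _ ≤ ((Γ * (X + Y)) ^ (2:ℕ)) ^ (1/2:ℝ) := ENNReal.rpow_le_rpow hsup (by norm_num)
      _ = Γ * (X + Y) := sqh _
  set X' := dnorm d s₀ A * vnorm d s v with hX'
  set Y' := dnorm d s A * vnorm d s₀ v with hY'
  have dvec : vnorm d s (mvec A v) ≤ Γ * (X' + Y') := by
    have hsup : (⨆ σ : Bool,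
        ∑' k : KI d, kwt k ^ (2 * s) * (‖mvec A v (σ, k)‖₊ : ℝ≥0∞) ^ (2:ℕ))
        ≤ (Γ * (X' + Y')) ^ (2:ℕ) := by
      refine iSup_le fun σ => ?_
      calc ∑' k : KI d, kwt k ^ (2 * s) * (‖mvec A v (σ, k)‖₊ : ℝ≥0∞) ^ (2:ℕ)
          ≤ (2:ℝ≥0∞) ^ s * (2:ℝ≥0∞) ^ s * 64 * (K + K') * (X' + Y') ^ (2:ℕ) :=
            key_vec h0 hs A v σ
        _ ≤ (2:ℝ≥0∞) ^ s * (2:ℝ≥0∞) ^ s * 64 * ((K + K') + 1) * (X' + Y') ^ (2:ℕ) := by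
            refine mul_le_mul_left (mul_le_mul_right ?_ _) _
            exact le_add_right le_rfl
        _ = (Γ * (X' + Y')) ^ (2:ℕ) := by rw [mul_pow, hΓsq]
    calc vnorm d s (mvec A v)
        ≤ ((Γ * (X' + Y')) ^ (2:ℕ)) ^ (1/2:ℝ) := ENNReal.rpow_le_rpow hsup (by norm_num)
      _ = Γ * (X' + Y') := sqh _
  have hΓ2 : Γ ≤ 2 * Γ := by
    calc Γ = 1 * Γ := (one_mul Γ).symm
      _ ≤ 2 * Γ := mul_le_mul_left (by norm_num) Γ
  refine ⟨?_, ?_, ?_⟩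
  · calc dnorm d s (mprod A B)
        ≤ (2 * Γ) * (X + Y) := dmat.trans (mul_le_mul_left hΓ2 _)
      _ = ENNReal.ofReal C * dnorm d s₀ A * dnorm d s B +
          ENNReal.ofReal C * dnorm d s A * dnorm d s₀ B := by
          rw [hC, hX, hY]; ring
  · calc dnorm d s (mprod A B) ≤ Γ * (X + Y) := dmat
      _ ≤ Γ * (dnorm d s A * dnorm d s B + dnorm d s A * dnorm d s B) := by
          refine mul_le_mul_right (add_le_add ?_ ?_) Γ
          · exact mul_le_mul_left (dnorm_mono hs A) _
          · exact mul_le_mul_right (dnorm_mono hs B) _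
      _ = ENNReal.ofReal C * dnorm d s A * dnorm d s B := by rw [hC]; ring
  · calc vnorm d s (mvec A v)
        ≤ (2 * Γ) * (X' + Y') := dvec.trans (mul_le_mul_left hΓ2 _)
      _ = ENNReal.ofReal C * (dnorm d s₀ A * vnorm d s v + dnorm d s A * vnorm d s₀ v) := by
          rw [hC, hX', hY']
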